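/- Greedy submodular maximization guarantee: let F be a monotone nondecreasing submodular set function on subsets of [n] with F(∅) = 0, and let the greedy algorithm iteratively add the element with the largest marginal gain for c steps, producing set G_c. Then F(G_c) ≥ (1 − (1 − 1/c)^c)·max_{|V|≤c} F(V) ≥ (1 − 1/e)·max_{|V|≤c} F(V). -/
import Mathlib


/-- greedy submodular maximization guarantee. For a monotone
nondecreasing submodular set function `F` with `F(∅) = 0` and greedy iterates
`G₀ = ∅`, `G_{t+1} = G_t ∪ {argmaxₓ F(G_t ∪ {x}) − F(G_t)}`, after `c` steps
`F(G_c) ≥ (1 − (1 − 1/c)^c)·max_{|V|≤c} F(V) ≥ (1 − 1/e)·max_{|V|≤c} F(V)`. -/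
theorem greedy_submodular_maximization_guarantee
    (n c : ℕ) (hc : 0 < c) (hcn : c ≤ n)
    (F : Finset (Fin n) → ℝ)
    (hmono : ∀ V W : Finset (Fin n), V ⊆ W → F V ≤ F W)
    (hsub : ∀ V W : Finset (Fin n), ∀ x : Fin n, V ⊆ W → x ∉ W →
      F (insert x W) - F W ≤ F (insert x V) - F V)
    (hF0 : F ∅ = 0)
    (G : ℕ → Finset (Fin n))
    (hG0 : G 0 = ∅)
    (hGstep : ∀ t, ∃ x : Fin n, G (t + 1) = insert x (G t) ∧
      ∀ y : Fin n, F (insert y (G t)) - F (G t) ≤ F (insert x (G t)) - F (G t)) :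
    ∀ V : Finset (Fin n), V.card ≤ c →
      (1 - (1 - 1 / (c : ℝ)) ^ c) * F V ≤ F (G c) ∧
      (1 - 1 / Real.exp 1) * F V ≤ F (G c) := by
  intro V hV
  have hcpos : (0:ℝ) < c := by exact_mod_cast hc
  have hc1 : (1:ℝ) ≤ c := by exact_mod_cast hc
  have hFV0 : 0 ≤ F V := by
    rw [← hF0]; exact hmono _ _ (Finset.empty_subset V)
  have h0 : (0:ℝ) ≤ 1 - 1/(c:ℝ) := by
    have : 1/(c:ℝ) ≤ 1 := div_le_one_of_le₀ hc1 (le_of_lt hcpos)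
    linarith
  -- telescoping submodularity bound
  have hsum : ∀ (S T : Finset (Fin n)),
      F (S ∪ T) - F S ≤ ∑ x ∈ T, (F (insert x S) - F S) := by
    intro S T
    induction T using Finset.induction_on with
    | empty => simp
    | @insert a s hx ih =>
      rw [Finset.sum_insert hx]
      have h1 : S ∪ insert a s = insert a (S ∪ s) := Finset.union_insert a S s
      by_cases ha : a ∈ S ∪ s
      · have he : insert a (S ∪ s) = S ∪ s := Finset.insert_eq_self.mpr ha
        rw [h1, he]
        have hge : 0 ≤ F (insert a S) - F S :=
          sub_nonneg.mpr (hmono _ _ (Finset.subset_insert a S))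
        linarith
      · have h2 := hsub S (S ∪ s) a Finset.subset_union_left ha
        rw [h1]; linarith
  -- per-step contraction
  have hstep : ∀ t, F V - F (G (t+1)) ≤ (1 - 1/(c:ℝ)) * (F V - F (G t)) := by
    intro t
    obtain ⟨x, hGx, hxmax⟩ := hGstep t
    have hδ0 : 0 ≤ F (insert x (G t)) - F (G t) :=
      sub_nonneg.mpr (hmono _ _ (Finset.subset_insert x (G t)))
    have key : F V - F (G t) ≤ (c:ℝ) * (F (insert x (G t)) - F (G t)) := by
      have h1 : F V ≤ F (G t ∪ V) := hmono _ _ Finset.subset_union_right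
      have h2 := hsum (G t) V
      have h3 : ∑ y ∈ V, (F (insert y (G t)) - F (G t)) ≤
          ∑ _y ∈ V, (F (insert x (G t)) - F (G t)) :=
        Finset.sum_le_sum (fun y _ => hxmax y)
      rw [Finset.sum_const, nsmul_eq_mul] at h3
      have hcard : (V.card : ℝ) ≤ (c : ℝ) := by exact_mod_cast hV
      have h4 : (V.card : ℝ) * (F (insert x (G t)) - F (G t)) ≤
          (c:ℝ) * (F (insert x (G t)) - F (G t)) :=
        mul_le_mul_of_nonneg_right hcard hδ0
      linarith
    have h5 : (F V - F (G t)) / c ≤ F (insert x (G t)) - F (G t) := by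
      rw [div_le_iff₀ hcpos, mul_comm]; linarith
    rw [hGx]
    have hring : (1 - 1/(c:ℝ)) * (F V - F (G t)) =
        (F V - F (G t)) - (F V - F (G t)) / c := by ring
    rw [hring]; linarith
  -- iterate
  have hiter : ∀ t, F V - F (G t) ≤ (1 - 1/(c:ℝ))^t * F V := by
    intro t
    induction t with
    | zero => simp [hG0, hF0]
    | succ t ih =>
      calc F V - F (G (t+1)) ≤ (1 - 1/(c:ℝ)) * (F V - F (G t)) := hstep t
        _ ≤ (1 - 1/(c:ℝ)) * ((1 - 1/(c:ℝ))^t * F V) :=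
            mul_le_mul_of_nonneg_left ih h0
        _ = (1 - 1/(c:ℝ))^(t+1) * F V := by ring
  have hmain : (1 - (1 - 1 / (c : ℝ)) ^ c) * F V ≤ F (G c) := by
    have h := hiter c
    have hring : (1 - (1 - 1/(c:ℝ))^c) * F V = F V - (1 - 1/(c:ℝ))^c * F V := by ring
    linarith
  refine ⟨hmain, ?_⟩
  -- (1 - 1/c)^c ≤ 1/e
  have hexp : (1:ℝ) - 1/c ≤ Real.exp (-(1/(c:ℝ))) := by
    have := Real.add_one_le_exp (-(1/(c:ℝ)))
    linarith
  have hpow : (1 - 1/(c:ℝ))^c ≤ (Real.exp (-(1/(c:ℝ))))^c :=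
    pow_le_pow_left₀ h0 hexp c
  have heq : (Real.exp (-(1/(c:ℝ))))^c = 1 / Real.exp 1 := by
    rw [← Real.exp_nat_mul]
    have : (c:ℝ) * -(1/(c:ℝ)) = -1 := by field_simp
    rw [this, Real.exp_neg, one_div]
  have hle : (1 - 1/Real.exp 1) ≤ 1 - (1 - 1/(c:ℝ))^c := by
    rw [← heq]; linarith
  calc (1 - 1/Real.exp 1) * F V ≤ (1 - (1 - 1/(c:ℝ))^c) * F V :=
        mul_le_mul_of_nonneg_right hle hFV0
    _ ≤ F (G c) := hmain
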